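/- (Non-mean-field bound for the pure state of the DHM.) For every β > 0, J > 0, σ ∈ (1/2,1), h ∈ ℝ and every real m, the thermodynamic-limit free energy satisfies f(h,β,J,σ) ≥ log 2 + log cosh(βh + βJ m (C_{2σ−1} − C_{2σ})) − (βJ/2)(C_{2σ−1} − C_{2σ}) m². -/

import Mathlib

open Real Filter

/-- The ±1 value of a Boolean spin. -/
noncomputable def spin (b : Bool) : ℝ := if b then 1 else -1

/-- Embedding of the first half of the sites. -/
def finLeft {k : ℕ} (i : Fin (2 ^ k)) : Fin (2 ^ (k + 1)) :=
  ⟨i.1, lt_of_lt_of_le i.2 (Nat.pow_le_pow_right (by norm_num) (Nat.le_succ k))⟩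

/-- Embedding of the second half of the sites. -/
def finRight {k : ℕ} (i : Fin (2 ^ k)) : Fin (2 ^ (k + 1)) :=
  ⟨i.1 + 2 ^ k, by
    have h2 : 2 ^ (k + 1) = 2 ^ k + 2 ^ k := by rw [pow_succ]; ring
    have := i.2; omega⟩

/-- The Dyson hierarchical model Hamiltonian, defined recursively. -/
noncomputable def dysonH (J σ : ℝ) : (k : ℕ) → (Fin (2 ^ k) → Bool) → ℝ
  | 0, _ => 0
  | (k + 1), S =>
      dysonH J σ k (fun i => S (finLeft i)) + dysonH J σ k (fun i => S (finRight i)) -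
        J / (2 : ℝ) ^ (2 * σ * ((k : ℝ) + 1)) *
          ∑ i : Fin (2 ^ (k + 1)), ∑ j : Fin (2 ^ (k + 1)),
            if i < j then spin (S i) * spin (S j) else 0

/-- The finite-volume free energy of the Dyson hierarchical model. -/
noncomputable def dysonF (h β J σ : ℝ) (k : ℕ) : ℝ :=
  ((2 : ℝ) ^ k)⁻¹ * Real.log (∑ S : Fin (2 ^ k) → Bool,
    Real.exp (-β * dysonH J σ k S + β * h * ∑ i, spin (S i)))

/-- The constant `C_y = 2^{-y} / (1 - 2^{-y})`. -/
noncomputable def Cconst (y : ℝ) : ℝ := (2 : ℝ) ^ (-y) / (1 - (2 : ℝ) ^ (-y))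

noncomputable def bw (t : ℝ) (b : Bool) : ℝ := (1 + t * spin b) / 2

lemma bw_true (t : ℝ) : bw t true = (1 + t) / 2 := by simp [bw, spin]
lemma bw_false (t : ℝ) : bw t false = (1 - t) / 2 := by simp [bw, spin]; ring
lemma bw_sum (t : ℝ) : bw t false + bw t true = 1 := by simp [bw, spin]; ring
lemma bw_pos {t : ℝ} (ht : t ∈ Set.Ioo (-1:ℝ) 1) (b : Bool) : 0 < bw t b := by
  obtain ⟨h1, h2⟩ := ht
  cases b <;> simp [bw, spin] <;> nlinarith

noncomputable def Wn (n : ℕ) (t : ℝ) (S : Fin n → Bool) : ℝ := ∏ i, bw t (S i)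

lemma master (n : ℕ) (f : Fin n → Bool → ℝ) :
    ∑ S : Fin n → Bool, ∏ i, f i (S i) = ∏ i, (f i false + f i true) := by
  rw [← Fintype.prod_sum]
  exact Finset.prod_congr rfl fun i _ => by simp [Fintype.sum_bool, add_comm]

lemma prod_single_ite (n : ℕ) (i0 : Fin n) (a : Fin n → ℝ) :
    ∏ i, (if i = i0 then a i else 1) = a i0 := by
  rw [Finset.prod_ite_eq' Finset.univ i0 a]; simp

lemma prod_double_ite (n : ℕ) {i0 j0 : Fin n} (hij : i0 ≠ j0) (a b : Fin n → ℝ) :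
    ∏ i, (if i = i0 then a i else if i = j0 then b i else 1) = a i0 * b j0 := by
  have : ∀ i : Fin n, (if i = i0 then a i else if i = j0 then b i else 1)
      = (if i = i0 then a i else 1) * (if i = j0 then b i else 1) := by
    intro i
    by_cases h1 : i = i0 <;> by_cases h2 : i = j0 <;> simp [h1, h2] at * <;> simp_all
  simp only [this, Finset.prod_mul_distrib, prod_single_ite]

lemma sum_W (n : ℕ) (t : ℝ) : ∑ S : Fin n → Bool, Wn n t S = 1 := by
  have := master n (fun _ b => bw t b)
  simpa [Wn, bw_sum] using this

lemma sum_W_one (n : ℕ) (t : ℝ) (g : Bool → ℝ) (i0 : Fin n) :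
    ∑ S : Fin n → Bool, Wn n t S * g (S i0)
      = bw t false * g false + bw t true * g true := by
  have key := master n (fun i b => bw t b * (if i = i0 then g b else 1))
  have l1 : ∀ S : Fin n → Bool,
      (∏ i, bw t (S i) * (if i = i0 then g (S i) else 1)) = Wn n t S * g (S i0) := by
    intro S
    rw [Finset.prod_mul_distrib, prod_single_ite n i0 (fun i => g (S i))]
    rfl
  have l2 : (∏ i : Fin n, (bw t false * (if i = i0 then g false else 1)
      + bw t true * (if i = i0 then g true else 1)))
      = bw t false * g false + bw t true * g true := by
    have : ∀ i : Fin n, (bw t false * (if i = i0 then g false else 1)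
        + bw t true * (if i = i0 then g true else 1))
        = (if i = i0 then bw t false * g false + bw t true * g true else 1) := by
      intro i; by_cases h : i = i0 <;> simp [h, bw_sum]
    rw [Finset.prod_congr rfl fun i _ => this i,
      prod_single_ite n i0 (fun _ => bw t false * g false + bw t true * g true)]
  rw [← l2, ← key]
  exact Finset.sum_congr rfl fun S _ => (l1 S).symm

lemma sum_W_two (n : ℕ) (t : ℝ) (g h : Bool → ℝ) {i0 j0 : Fin n} (hij : i0 ≠ j0) :
    ∑ S : Fin n → Bool, Wn n t S * (g (S i0) * h (S j0))
      = (bw t false * g false + bw t true * g true)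
        * (bw t false * h false + bw t true * h true) := by
  have key := master n (fun i b => bw t b * (if i = i0 then g b else if i = j0 then h b else 1))
  have l1 : ∀ S : Fin n → Bool,
      (∏ i, bw t (S i) * (if i = i0 then g (S i) else if i = j0 then h (S i) else 1))
        = Wn n t S * (g (S i0) * h (S j0)) := by
    intro S
    rw [Finset.prod_mul_distrib, prod_double_ite n hij (fun i => g (S i)) (fun i => h (S i))]
    rfl
  have l2 : (∏ i : Fin n, (bw t false * (if i = i0 then g false else if i = j0 then h false else 1)
      + bw t true * (if i = i0 then g true else if i = j0 then h true else 1)))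
      = (bw t false * g false + bw t true * g true)
        * (bw t false * h false + bw t true * h true) := by
    have : ∀ i : Fin n, (bw t false * (if i = i0 then g false else if i = j0 then h false else 1)
        + bw t true * (if i = i0 then g true else if i = j0 then h true else 1))
        = (if i = i0 then bw t false * g false + bw t true * g true
            else if i = j0 then bw t false * h false + bw t true * h true else 1) := by
      intro i
      by_cases h1 : i = i0 <;> by_cases h2 : i = j0 <;>
        simp [h1, h2, bw_sum, hij.symm] <;> simp_all
    rw [Finset.prod_congr rfl fun i _ => this i, prod_double_ite n hij]
  rw [← l2, ← key]
  exact Finset.sum_congr rfl fun S _ => (l1 S).symm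

lemma spin_sum_bw (t : ℝ) : bw t false * spin false + bw t true * spin true = t := by
  simp [bw_true, bw_false, spin]; ring

lemma sum_W_spin (n : ℕ) (t : ℝ) (i0 : Fin n) :
    ∑ S : Fin n → Bool, Wn n t S * spin (S i0) = t := by
  rw [sum_W_one n t spin i0, spin_sum_bw]

lemma sum_W_spin2 (n : ℕ) (t : ℝ) {i0 j0 : Fin n} (hij : i0 ≠ j0) :
    ∑ S : Fin n → Bool, Wn n t S * (spin (S i0) * spin (S j0)) = t ^ 2 := by
  rw [sum_W_two n t spin spin hij, spin_sum_bw]; ring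

lemma count_pairs (n : ℕ) :
    ∑ i : Fin n, ∑ j : Fin n, (if i < j then (1:ℝ) else 0) = ((n:ℝ)^2 - n) / 2 := by
  have h1 : ∑ i : Fin n, ∑ j : Fin n,
      ((if i < j then (1:ℝ) else 0) + (if j < i then (1:ℝ) else 0) + (if i = j then (1:ℝ) else 0))
      = (n:ℝ) * n := by
    have : ∀ i j : Fin n,
        ((if i < j then (1:ℝ) else 0) + (if j < i then (1:ℝ) else 0)
          + (if i = j then (1:ℝ) else 0)) = 1 := by
      intro i j
      rcases lt_trichotomy i j with h | h | h
      · simp [h, h.ne, h.ne', not_lt_of_gt h]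
      · simp [h]
      · simp [h, h.ne, h.ne', not_lt_of_gt h]
    simp only [this]
    simp [mul_comm]
  have h2 : ∑ i : Fin n, ∑ j : Fin n, (if j < i then (1:ℝ) else 0)
      = ∑ i : Fin n, ∑ j : Fin n, (if i < j then (1:ℝ) else 0) := Finset.sum_comm
  have h3 : ∑ i : Fin n, ∑ j : Fin n, (if i = j then (1:ℝ) else 0) = (n:ℝ) := by
    simp [Finset.sum_ite_eq]
  simp only [Finset.sum_add_distrib] at h1
  rw [h2, h3] at h1
  nlinarith [h1]

lemma sum_W_pairs (n : ℕ) (t : ℝ) :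
    ∑ S : Fin n → Bool, Wn n t S *
        (∑ i : Fin n, ∑ j : Fin n, if i < j then spin (S i) * spin (S j) else 0)
      = t ^ 2 * (((n:ℝ)^2 - n) / 2) := by
  have swap : ∑ S : Fin n → Bool, Wn n t S *
        (∑ i : Fin n, ∑ j : Fin n, if i < j then spin (S i) * spin (S j) else 0)
      = ∑ i : Fin n, ∑ j : Fin n, ∑ S : Fin n → Bool,
          Wn n t S * (if i < j then spin (S i) * spin (S j) else 0) := by
    simp_rw [Finset.mul_sum]
    rw [Finset.sum_comm]
    refine Finset.sum_congr rfl fun i _ => Finset.sum_comm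
  rw [swap]
  have inner : ∀ i j : Fin n, (∑ S : Fin n → Bool,
      Wn n t S * (if i < j then spin (S i) * spin (S j) else 0))
      = (if i < j then t ^ 2 else 0) := by
    intro i j
    by_cases hlt : i < j
    · simp only [hlt, if_true]
      exact sum_W_spin2 n t hlt.ne
    · simp [hlt]
  simp only [inner]
  rw [← count_pairs n]
  simp_rw [Finset.mul_sum]
  refine Finset.sum_congr rfl fun i _ => Finset.sum_congr rfl fun j _ => ?_
  by_cases hlt : i < j <;> simp [hlt]

lemma two_pow_succ (k : ℕ) : 2 ^ (k + 1) = 2 ^ k + 2 ^ k := by rw [pow_succ]; ring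

def glue {k : ℕ} (T U : Fin (2 ^ k) → Bool) : Fin (2 ^ (k + 1)) → Bool :=
  fun i => if h : i.1 < 2 ^ k then T ⟨i.1, h⟩
    else U ⟨i.1 - 2 ^ k, by have := two_pow_succ k; have := i.2; omega⟩

lemma glue_finLeft {k : ℕ} (T U : Fin (2 ^ k) → Bool) (i : Fin (2 ^ k)) :
    glue T U (finLeft i) = T i := by
  simp only [glue, finLeft, i.2, dif_pos]
  simp

lemma glue_finRight {k : ℕ} (T U : Fin (2 ^ k) → Bool) (i : Fin (2 ^ k)) :
    glue T U (finRight i) = U i := by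
  have hnot : ¬ ((finRight i).1 < 2 ^ k) := by simp [finRight]
  simp only [glue, hnot, dif_neg, not_false_iff]
  congr 1
  ext
  simp [finRight]

lemma glue_eta {k : ℕ} (S : Fin (2 ^ (k + 1)) → Bool) :
    glue (fun i => S (finLeft i)) (fun i => S (finRight i)) = S := by
  funext i
  by_cases h : i.1 < 2 ^ k
  · simp only [glue, h, dif_pos]
    congr 1
  · simp only [glue, h, dif_neg, not_false_iff]
    congr 1
    ext
    simp only [finRight]
    have := two_pow_succ k; have := i.2; omega

def glueEquiv (k : ℕ) : ((Fin (2 ^ k) → Bool) × (Fin (2 ^ k) → Bool)) ≃ (Fin (2 ^ (k + 1)) → Bool) where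
  toFun p := glue p.1 p.2
  invFun S := (fun i => S (finLeft i), fun i => S (finRight i))
  left_inv p := by
    ext i
    · exact glue_finLeft p.1 p.2 i
    · exact glue_finRight p.1 p.2 i
  right_inv S := glue_eta S

lemma sum_glue {k : ℕ} (F : (Fin (2 ^ (k + 1)) → Bool) → ℝ) :
    ∑ S : Fin (2 ^ (k + 1)) → Bool, F S
      = ∑ T : Fin (2 ^ k) → Bool, ∑ U : Fin (2 ^ k) → Bool, F (glue T U) := by
  rw [← Equiv.sum_comp (glueEquiv k) F, Fintype.sum_prod_type]
  rfl

lemma prod_split {k : ℕ} (f : Fin (2 ^ (k + 1)) → ℝ) :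
    ∏ i, f i = (∏ i : Fin (2 ^ k), f (finLeft i)) * ∏ i : Fin (2 ^ k), f (finRight i) := by
  have h : 2 ^ (k + 1) = 2 ^ k + 2 ^ k := two_pow_succ k
  calc ∏ i : Fin (2 ^ (k + 1)), f i
      = ∏ i : Fin (2 ^ k + 2 ^ k), f (Fin.cast h.symm i) :=
        (Fintype.prod_equiv (finCongr h.symm) _ _ fun i => rfl).symm
    _ = (∏ i : Fin (2 ^ k), f (Fin.cast h.symm (Fin.castAdd _ i)))
        * ∏ i : Fin (2 ^ k), f (Fin.cast h.symm (Fin.natAdd _ i)) := Fin.prod_univ_add _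
    _ = (∏ i : Fin (2 ^ k), f (finLeft i)) * ∏ i : Fin (2 ^ k), f (finRight i) := by
        congr 1 <;> refine Finset.prod_congr rfl fun i _ => ?_ <;> congr 1 <;> ext <;>
          simp [finLeft, finRight, Fin.cast, Fin.castAdd, Fin.natAdd, Nat.add_comm]

lemma W_glue {k : ℕ} (t : ℝ) (T U : Fin (2 ^ k) → Bool) :
    Wn (2 ^ (k + 1)) t (glue T U) = Wn (2 ^ k) t T * Wn (2 ^ k) t U := by
  unfold Wn
  rw [prod_split (fun i => bw t (glue T U i))]
  simp [glue_finLeft, glue_finRight]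

noncomputable def Dk (σ : ℝ) (k : ℕ) : ℝ :=
  ∑ l ∈ Finset.range k, (2 : ℝ) ^ (-(2 * σ) * ((l : ℝ) + 1)) * ((2 : ℝ) ^ (l + 1) - 1)

lemma EH (J σ t : ℝ) : ∀ k : ℕ,
    ∑ S : Fin (2 ^ k) → Bool, Wn (2 ^ k) t S * dysonH J σ k S
      = -(J / 2) * Dk σ k * t ^ 2 * 2 ^ k := by
  intro k
  induction k with
  | zero => simp [dysonH, Dk]
  | succ k ih =>
    have hsplit : ∑ S : Fin (2 ^ (k + 1)) → Bool, Wn (2 ^ (k + 1)) t S * dysonH J σ (k + 1) S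
        = ∑ T : Fin (2 ^ k) → Bool, ∑ U : Fin (2 ^ k) → Bool,
            (Wn (2 ^ k) t T * Wn (2 ^ k) t U) * (dysonH J σ k T + dysonH J σ k U)
          - ∑ S : Fin (2 ^ (k + 1)) → Bool, Wn (2 ^ (k + 1)) t S *
              (J / (2 : ℝ) ^ (2 * σ * ((k : ℝ) + 1)) *
                ∑ i : Fin (2 ^ (k + 1)), ∑ j : Fin (2 ^ (k + 1)),
                  if i < j then spin (S i) * spin (S j) else 0) := by
      rw [sum_glue (fun S => Wn (2 ^ (k + 1)) t S * dysonH J σ (k + 1) S),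
          sum_glue (fun S => Wn (2 ^ (k + 1)) t S *
            (J / (2 : ℝ) ^ (2 * σ * ((k : ℝ) + 1)) *
              ∑ i : Fin (2 ^ (k + 1)), ∑ j : Fin (2 ^ (k + 1)),
                if i < j then spin (S i) * spin (S j) else 0))]
      rw [← Finset.sum_sub_distrib]
      refine Finset.sum_congr rfl fun T _ => ?_
      rw [← Finset.sum_sub_distrib]
      refine Finset.sum_congr rfl fun U _ => ?_
      have hL : (fun i => glue T U (finLeft i)) = T := funext (glue_finLeft T U)
      have hR : (fun i => glue T U (finRight i)) = U := funext (glue_finRight T U)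
      show Wn (2 ^ (k + 1)) t (glue T U) * dysonH J σ (k + 1) (glue T U) = _
      rw [dysonH]
      rw [hL, hR, W_glue]
      ring
    rw [hsplit]
    have h1 : ∑ T : Fin (2 ^ k) → Bool, ∑ U : Fin (2 ^ k) → Bool,
        (Wn (2 ^ k) t T * Wn (2 ^ k) t U) * (dysonH J σ k T + dysonH J σ k U)
        = 2 * (-(J / 2) * Dk σ k * t ^ 2 * 2 ^ k) := by
      have expand : ∀ T U : Fin (2 ^ k) → Bool,
          (Wn (2 ^ k) t T * Wn (2 ^ k) t U) * (dysonH J σ k T + dysonH J σ k U)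
          = (Wn (2 ^ k) t T * dysonH J σ k T) * Wn (2 ^ k) t U
            + Wn (2 ^ k) t T * (Wn (2 ^ k) t U * dysonH J σ k U) := by intros; ring
      calc ∑ T : Fin (2 ^ k) → Bool, ∑ U : Fin (2 ^ k) → Bool,
            (Wn (2 ^ k) t T * Wn (2 ^ k) t U) * (dysonH J σ k T + dysonH J σ k U)
          = ∑ T : Fin (2 ^ k) → Bool,
              ((Wn (2 ^ k) t T * dysonH J σ k T) * (∑ U : Fin (2 ^ k) → Bool, Wn (2 ^ k) t U)
                + Wn (2 ^ k) t T * (∑ U : Fin (2 ^ k) → Bool, Wn (2 ^ k) t U * dysonH J σ k U)) := by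
            refine Finset.sum_congr rfl fun T _ => ?_
            rw [Finset.mul_sum, Finset.mul_sum, ← Finset.sum_add_distrib]
            exact Finset.sum_congr rfl fun U _ => by ring
        _ = 2 * (-(J / 2) * Dk σ k * t ^ 2 * 2 ^ k) := by
            rw [sum_W, ih, Finset.sum_add_distrib, ← Finset.sum_mul, ← Finset.sum_mul, ih, sum_W]
            ring
    have h2 : ∑ S : Fin (2 ^ (k + 1)) → Bool, Wn (2 ^ (k + 1)) t S *
          (J / (2 : ℝ) ^ (2 * σ * ((k : ℝ) + 1)) *
            ∑ i : Fin (2 ^ (k + 1)), ∑ j : Fin (2 ^ (k + 1)),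
              if i < j then spin (S i) * spin (S j) else 0)
        = J / (2 : ℝ) ^ (2 * σ * ((k : ℝ) + 1)) *
            (t ^ 2 * ((((2 ^ (k + 1) : ℕ) : ℝ) ^ 2 - ((2 ^ (k + 1) : ℕ) : ℝ)) / 2)) := by
      rw [← sum_W_pairs (2 ^ (k + 1)) t, Finset.mul_sum]
      exact Finset.sum_congr rfl fun S _ => by ring
    rw [h1, h2]
    have hDk : Dk σ (k + 1) = Dk σ k
        + (2 : ℝ) ^ (-(2 * σ) * ((k : ℝ) + 1)) * ((2 : ℝ) ^ (k + 1) - 1) := by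
      rw [Dk, Finset.sum_range_succ]; rfl
    rw [hDk]
    have hx : (2 : ℝ) ^ (-(2 * σ) * ((k : ℝ) + 1))
        = ((2 : ℝ) ^ (2 * σ * ((k : ℝ) + 1)))⁻¹ := by
      rw [show (-(2 * σ) * ((k : ℝ) + 1)) = -(2 * σ * ((k : ℝ) + 1)) by ring,
        Real.rpow_neg (by norm_num)]
    rw [hx]
    have hxne : ((2 : ℝ) ^ (2 * σ * ((k : ℝ) + 1))) ≠ 0 :=
      (Real.rpow_pos_of_pos (by norm_num) _).ne'
    have hcast : (((2 ^ (k + 1) : ℕ) : ℝ)) = (2 : ℝ) ^ (k + 1) := by push_cast; ring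
    rw [hcast]
    field_simp
    ring

noncomputable def ent (t : ℝ) : ℝ :=
  bw t false * Real.log (bw t false) + bw t true * Real.log (bw t true)

lemma sum_W_log (n : ℕ) {t : ℝ} (ht : t ∈ Set.Ioo (-1:ℝ) 1) :
    ∑ S : Fin n → Bool, Wn n t S * Real.log (Wn n t S) = n * ent t := by
  have hlog : ∀ S : Fin n → Bool, Real.log (Wn n t S) = ∑ i, Real.log (bw t (S i)) := by
    intro S
    exact Real.log_prod fun i _ => (bw_pos ht (S i)).ne'
  calc ∑ S : Fin n → Bool, Wn n t S * Real.log (Wn n t S)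
      = ∑ i : Fin n, ∑ S : Fin n → Bool, Wn n t S * Real.log (bw t (S i)) := by
        simp_rw [hlog, Finset.mul_sum]
        exact Finset.sum_comm
    _ = ∑ i : Fin n, ent t := by
        refine Finset.sum_congr rfl fun i _ => ?_
        rw [sum_W_one n t (fun b => Real.log (bw t b)) i]; rfl
    _ = n * ent t := by simp [mul_comm]

lemma sum_W_magnet (n : ℕ) (t : ℝ) :
    ∑ S : Fin n → Bool, Wn n t S * (∑ i, spin (S i)) = n * t := by
  calc ∑ S : Fin n → Bool, Wn n t S * (∑ i, spin (S i))
      = ∑ i : Fin n, ∑ S : Fin n → Bool, Wn n t S * spin (S i) := by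
        simp_rw [Finset.mul_sum]
        exact Finset.sum_comm
    _ = ∑ i : Fin n, t := Finset.sum_congr rfl fun i _ => sum_W_spin n t i
    _ = n * t := by simp [mul_comm]

lemma jensen_bound (h β J σ : ℝ) {t : ℝ} (ht : t ∈ Set.Ioo (-1:ℝ) 1) (k : ℕ) :
    dysonF h β J σ k ≥ β * h * t + β * J / 2 * Dk σ k * t ^ 2 - ent t := by
  set n := 2 ^ k with hn
  set A : (Fin n → Bool) → ℝ :=
    fun S => -β * dysonH J σ k S + β * h * ∑ i, spin (S i) with hA
  have hWpos : ∀ S : Fin n → Bool, 0 < Wn n t S :=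
    fun S => Finset.prod_pos fun i _ => bw_pos ht (S i)
  have hZ : ∑ S : Fin n → Bool, Real.exp (A S)
      = ∑ S : Fin n → Bool, Wn n t S * Real.exp (A S - Real.log (Wn n t S)) := by
    refine Finset.sum_congr rfl fun S _ => ?_
    rw [Real.exp_sub, Real.exp_log (hWpos S), mul_comm, div_mul_cancel₀ _ (hWpos S).ne']
  have hjensen : Real.exp (∑ S : Fin n → Bool, Wn n t S * (A S - Real.log (Wn n t S)))
      ≤ ∑ S : Fin n → Bool, Wn n t S * Real.exp (A S - Real.log (Wn n t S)) := by
    have := convexOn_exp.map_sum_le (t := Finset.univ)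
      (w := fun S : Fin n → Bool => Wn n t S)
      (p := fun S : Fin n → Bool => A S - Real.log (Wn n t S))
      (fun S _ => (hWpos S).le) (by rw [sum_W]) (fun S _ => Set.mem_univ _)
    simpa using this
  have hlogZ : Real.log (∑ S : Fin n → Bool, Real.exp (A S))
      ≥ ∑ S : Fin n → Bool, Wn n t S * (A S - Real.log (Wn n t S)) := by
    rw [hZ]
    calc ∑ S : Fin n → Bool, Wn n t S * (A S - Real.log (Wn n t S))
        = Real.log (Real.exp (∑ S : Fin n → Bool, Wn n t S * (A S - Real.log (Wn n t S)))) := by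
          rw [Real.log_exp]
      _ ≤ Real.log (∑ S : Fin n → Bool, Wn n t S * Real.exp (A S - Real.log (Wn n t S))) := by
          apply Real.log_le_log (Real.exp_pos _) hjensen
  have hsum : ∑ S : Fin n → Bool, Wn n t S * (A S - Real.log (Wn n t S))
      = β * (J / 2) * Dk σ k * t ^ 2 * n + β * h * (n * t) - n * ent t := by
    have e1 : ∑ S : Fin n → Bool, Wn n t S * (A S - Real.log (Wn n t S))
        = -β * (∑ S : Fin n → Bool, Wn n t S * dysonH J σ k S)
          + β * h * (∑ S : Fin n → Bool, Wn n t S * (∑ i, spin (S i)))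
          - ∑ S : Fin n → Bool, Wn n t S * Real.log (Wn n t S) := by
      calc ∑ S : Fin n → Bool, Wn n t S * (A S - Real.log (Wn n t S))
          = ∑ S : Fin n → Bool, (-β * (Wn n t S * dysonH J σ k S)
              + β * h * (Wn n t S * (∑ i, spin (S i))) - Wn n t S * Real.log (Wn n t S)) :=
            Finset.sum_congr rfl fun S _ => by rw [hA]; ring
        _ = _ := by
            rw [Finset.sum_sub_distrib, Finset.sum_add_distrib, ← Finset.mul_sum,
              ← Finset.mul_sum]
    rw [e1, EH J σ t k, sum_W_log n ht, sum_W_magnet n t]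
    simp only [hn]
    push_cast
    ring
  have hnpos : (0:ℝ) < (2:ℝ) ^ k := by positivity
  rw [dysonF, ge_iff_le]
  have hb : β * h * t + β * J / 2 * Dk σ k * t ^ 2 - ent t
      = ((2:ℝ) ^ k)⁻¹ * (β * (J / 2) * Dk σ k * t ^ 2 * n + β * h * (n * t) - n * ent t) := by
    simp only [hn]
    push_cast
    field_simp
    ring
  rw [hb]
  apply mul_le_mul_of_nonneg_left _ (by positivity)
  rw [← hsum]
  exact hlogZ

lemma geom_tendsto {r : ℝ} (h0 : 0 ≤ r) (h1 : r < 1) :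
    Tendsto (fun k => ∑ l ∈ Finset.range k, r ^ (l + 1)) atTop (nhds (r / (1 - r))) := by
  have hs : HasSum (fun n : ℕ => r ^ n) (1 - r)⁻¹ := hasSum_geometric_of_lt_one h0 h1
  have h2 : ∀ k : ℕ, ∑ l ∈ Finset.range k, r ^ (l + 1) = r * ∑ l ∈ Finset.range k, r ^ l := by
    intro k; rw [Finset.mul_sum]; exact Finset.sum_congr rfl fun l _ => by ring
  simp_rw [h2]
  have := hs.tendsto_sum_nat.const_mul r
  rw [div_eq_mul_inv]
  exact this

lemma Dk_term (σ : ℝ) (l : ℕ) :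
    (2 : ℝ) ^ (-(2 * σ) * ((l : ℝ) + 1)) * ((2 : ℝ) ^ (l + 1) - 1)
      = ((2 : ℝ) ^ ((1 : ℝ) - 2 * σ)) ^ (l + 1) - ((2 : ℝ) ^ (-(2 * σ))) ^ (l + 1) := by
  have h2 : (0 : ℝ) < 2 := two_pos
  have eA : (2 : ℝ) ^ (-(2 * σ) * ((l : ℝ) + 1)) * (2 : ℝ) ^ (l + 1)
      = (2 : ℝ) ^ (((1 : ℝ) - 2 * σ) * ((l : ℝ) + 1)) := by
    rw [← Real.rpow_natCast 2 (l + 1), ← Real.rpow_add h2]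
    congr 1; push_cast; ring
  have eB : ((2 : ℝ) ^ ((1 : ℝ) - 2 * σ)) ^ (l + 1)
      = (2 : ℝ) ^ (((1 : ℝ) - 2 * σ) * ((l : ℝ) + 1)) := by
    rw [← Real.rpow_natCast ((2 : ℝ) ^ ((1 : ℝ) - 2 * σ)) (l + 1), ← Real.rpow_mul h2.le]
    congr 1; push_cast; ring
  have eC : ((2 : ℝ) ^ (-(2 * σ))) ^ (l + 1) = (2 : ℝ) ^ (-(2 * σ) * ((l : ℝ) + 1)) := by
    rw [← Real.rpow_natCast ((2 : ℝ) ^ (-(2 * σ))) (l + 1), ← Real.rpow_mul h2.le]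
    congr 1; push_cast; ring
  rw [eB, eC, ← eA]; ring

lemma Dk_tendsto (σ : ℝ) (hσ : 1 / 2 < σ) :
    Tendsto (fun k => Dk σ k) atTop (nhds (Cconst (2 * σ - 1) - Cconst (2 * σ))) := by
  have hr1p : (0 : ℝ) < (2 : ℝ) ^ ((1 : ℝ) - 2 * σ) := Real.rpow_pos_of_pos two_pos _
  have hr1l : (2 : ℝ) ^ ((1 : ℝ) - 2 * σ) < 1 :=
    Real.rpow_lt_one_of_one_lt_of_neg one_lt_two (by linarith)
  have hr2p : (0 : ℝ) < (2 : ℝ) ^ (-(2 * σ)) := Real.rpow_pos_of_pos two_pos _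
  have hr2l : (2 : ℝ) ^ (-(2 * σ)) < 1 :=
    Real.rpow_lt_one_of_one_lt_of_neg one_lt_two (by linarith)
  have hD : ∀ k, Dk σ k
      = (∑ l ∈ Finset.range k, ((2 : ℝ) ^ ((1 : ℝ) - 2 * σ)) ^ (l + 1))
        - ∑ l ∈ Finset.range k, ((2 : ℝ) ^ (-(2 * σ))) ^ (l + 1) := by
    intro k
    rw [Dk, ← Finset.sum_sub_distrib]
    exact Finset.sum_congr rfl fun l _ => Dk_term σ l
  have c1 : Cconst (2 * σ - 1)
      = (2 : ℝ) ^ ((1 : ℝ) - 2 * σ) / (1 - (2 : ℝ) ^ ((1 : ℝ) - 2 * σ)) := by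
    unfold Cconst
    rw [show -(2 * σ - 1) = (1 : ℝ) - 2 * σ by ring]
  have c2 : Cconst (2 * σ) = (2 : ℝ) ^ (-(2 * σ)) / (1 - (2 : ℝ) ^ (-(2 * σ))) := rfl
  rw [c1, c2]
  simp_rw [hD]
  exact (geom_tendsto hr1p.le hr1l).sub (geom_tendsto hr2p.le hr2l)

lemma Cconst_diff_nonneg (σ : ℝ) (hσ : 1 / 2 < σ) :
    0 ≤ Cconst (2 * σ - 1) - Cconst (2 * σ) := by
  have hr1p : (0 : ℝ) < (2 : ℝ) ^ (-(2 * σ - 1)) := Real.rpow_pos_of_pos two_pos _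
  have hr1l : (2 : ℝ) ^ (-(2 * σ - 1)) < 1 :=
    Real.rpow_lt_one_of_one_lt_of_neg one_lt_two (by linarith)
  have hr2p : (0 : ℝ) < (2 : ℝ) ^ (-(2 * σ)) := Real.rpow_pos_of_pos two_pos _
  have hlt : (2 : ℝ) ^ (-(2 * σ)) < (2 : ℝ) ^ (-(2 * σ - 1)) := by
    apply Real.rpow_lt_rpow_left_iff one_lt_two |>.mpr
    linarith
  unfold Cconst
  rw [sub_nonneg, div_le_div_iff₀ (by linarith) (by linarith)]
  nlinarith

lemma tanh_mem (x : ℝ) : Real.tanh x ∈ Set.Ioo (-1 : ℝ) 1 := by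
  have hc := Real.cosh_pos x
  have h1 : Real.sinh x < Real.cosh x := by
    nlinarith [Real.cosh_sub_sinh x, Real.exp_pos (-x)]
  have h2 : -Real.cosh x < Real.sinh x := by
    nlinarith [Real.cosh_add_sinh x, Real.exp_pos x]
  constructor
  · rw [Real.tanh_eq_sinh_div_cosh, lt_div_iff₀ hc]; linarith
  · rw [Real.tanh_eq_sinh_div_cosh, div_lt_one hc]; exact h1

lemma ent_tanh (x : ℝ) :
    ent (Real.tanh x) = x * Real.tanh x - (Real.log 2 + Real.log (Real.cosh x)) := by
  have hc := Real.cosh_pos x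
  have hbt : bw (Real.tanh x) true = Real.exp x / (2 * Real.cosh x) := by
    rw [bw_true, Real.tanh_eq_sinh_div_cosh, ← Real.cosh_add_sinh]
    field_simp
  have hbf : bw (Real.tanh x) false = Real.exp (-x) / (2 * Real.cosh x) := by
    rw [bw_false, Real.tanh_eq_sinh_div_cosh, ← Real.cosh_sub_sinh]
    field_simp
  have h2c : Real.log (2 * Real.cosh x) = Real.log 2 + Real.log (Real.cosh x) :=
    Real.log_mul two_ne_zero hc.ne'
  have lt' : Real.log (bw (Real.tanh x) true) = x - (Real.log 2 + Real.log (Real.cosh x)) := by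
    rw [hbt, Real.log_div (Real.exp_ne_zero x) (by positivity), Real.log_exp, h2c]
  have lf' : Real.log (bw (Real.tanh x) false) = -x - (Real.log 2 + Real.log (Real.cosh x)) := by
    rw [hbf, Real.log_div (Real.exp_ne_zero _) (by positivity), Real.log_exp, h2c]
  rw [ent, lt', lf', bw_true, bw_false]
  ring

/-- non-mean-field bound for the pure state of the DHM. -/
theorem dyson_nmf_pure_bound (β J σ h m : ℝ) (hβ : 0 < β) (hJ : 0 < J)
    (hσ : σ ∈ Set.Ioo (1 / 2 : ℝ) 1) (F : ℝ)
    (hF : Tendsto (fun k => dysonF h β J σ k) atTop (nhds F)) :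
    F ≥ Real.log 2 +
        Real.log (Real.cosh (β * h + β * J * m * (Cconst (2 * σ - 1) - Cconst (2 * σ)))) -
        β * J / 2 * (Cconst (2 * σ - 1) - Cconst (2 * σ)) * m ^ 2 := by
  obtain ⟨hσ1, hσ2⟩ := hσ
  set D := Cconst (2 * σ - 1) - Cconst (2 * σ) with hDdef
  set x := β * h + β * J * m * D with hx
  set t := Real.tanh x with htdef
  have ht : t ∈ Set.Ioo (-1 : ℝ) 1 := tanh_mem x
  have hDnn : 0 ≤ D := Cconst_diff_nonneg σ hσ1
  have hseq : Tendsto (fun k => β * h * t + β * J / 2 * Dk σ k * t ^ 2 - ent t) atTop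
      (nhds (β * h * t + β * J / 2 * D * t ^ 2 - ent t)) := by
    apply Tendsto.sub _ tendsto_const_nhds
    apply Tendsto.add tendsto_const_nhds
    exact ((Dk_tendsto σ hσ1).const_mul (β * J / 2)).mul_const (t ^ 2)
  have hlim : β * h * t + β * J / 2 * D * t ^ 2 - ent t ≤ F :=
    le_of_tendsto_of_tendsto' hseq hF (fun k => jensen_bound h β J σ ht k)
  have hent := ent_tanh x
  rw [ge_iff_le]
  have key : Real.log 2 + Real.log (Real.cosh x) - β * J / 2 * D * m ^ 2
      ≤ β * h * t + β * J / 2 * D * t ^ 2 - ent t := by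
    rw [← htdef] at hent
    rw [hent]
    have hsq : 0 ≤ β * J / 2 * D * (t - m) ^ 2 := by positivity
    have hxt : x * t = β * h * t + β * J * m * D * t := by rw [hx]; ring
    have hsq' : 0 ≤ β * J / 2 * D * t ^ 2 - β * J * m * D * t + β * J / 2 * D * m ^ 2 := by
      nlinarith [hsq]
    clear_value t
    clear_value x
    clear_value D
    linarith [hxt, hsq']
  exact le_trans key hlim
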